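/- Let G be a finite simple graph on n vertices, let d = rk(G), let p = (p_1, …, p_n) be a max-rank vector coloring of G with p_i ∈ ℝ^d, and let P be the n×d matrix whose i-th row is p_i^T. Then a matrix M is the Gram matrix of an optimal vector coloring of G if and only if M = P(I + R)P^T for some symmetric d×d matrix R satisfying: (i) p_i^T R p_i = 0 for all vertices i; (ii) p_i^T R p_j ≤ −1 − p_i^T p_j whenever i ∼ j; and (iii) I + R is positive semidefinite. -/

import Mathlib

open Matrix Kronecker

noncomputable section VectorColoring

variable {V α β : Type*}

/-- A vector `t`-coloring of a graph `G`: vectors `p i` with `p i ⬝ᵥ p i = t - 1`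
and `p i ⬝ᵥ p j ≤ -1` on edges. -/
def IsVecColoring [Fintype V] (G : SimpleGraph V) (t : ℝ) {d : ℕ}
    (p : V → Fin d → ℝ) : Prop :=
  (∀ i, p i ⬝ᵥ p i = t - 1) ∧ ∀ i j, G.Adj i j → p i ⬝ᵥ p j ≤ -1

/-- The vector chromatic number: the least `t ≥ 1` admitting a vector `t`-coloring. -/
def vecChrom [Fintype V] (G : SimpleGraph V) : ℝ :=
  sInf {t : ℝ | 1 ≤ t ∧ ∃ (d : ℕ) (p : V → Fin d → ℝ), IsVecColoring G t p}

/-- A strict vector `t`-coloring: `p i ⬝ᵥ p j = -1` on edges. -/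
def IsStrictVecColoring [Fintype V] (G : SimpleGraph V) (t : ℝ) {d : ℕ}
    (p : V → Fin d → ℝ) : Prop :=
  (∀ i, p i ⬝ᵥ p i = t - 1) ∧ ∀ i j, G.Adj i j → p i ⬝ᵥ p j = -1

/-- The strict vector chromatic number. -/
def strictVecChrom [Fintype V] (G : SimpleGraph V) : ℝ :=
  sInf {t : ℝ | 1 ≤ t ∧ ∃ (d : ℕ) (p : V → Fin d → ℝ), IsStrictVecColoring G t p}

/-- The Gram matrix of a family of vectors. -/
def gramMat {d : ℕ} (p : V → Fin d → ℝ) : Matrix V V ℝ :=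
  Matrix.of fun i j => p i ⬝ᵥ p j

/-- `M` is the Gram matrix of an optimal vector coloring of `G`. -/
def IsOptGram [Fintype V] (G : SimpleGraph V) (M : Matrix V V ℝ) : Prop :=
  ∃ (d : ℕ) (p : V → Fin d → ℝ), IsVecColoring G (vecChrom G) p ∧ M = gramMat p

/-- `grk G = rk(G)`: the maximum rank of the Gram matrix of an optimal vector coloring. -/
def grk [Fintype V] (G : SimpleGraph V) : ℕ :=
  sSup {r : ℕ | ∃ M : Matrix V V ℝ, IsOptGram G M ∧ M.rank = r}

/-- The categorical (tensor) product of graphs. -/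
def catProd (G : SimpleGraph α) (H : SimpleGraph β) : SimpleGraph (α × β) where
  Adj x y := G.Adj x.1 y.1 ∧ H.Adj x.2 y.2
  symm := by constructor; intro x y hxy; exact ⟨hxy.1.symm, hxy.2.symm⟩
  loopless := by constructor; intro x hx; exact G.loopless.irrefl x.1 hx.1

/-- A feasible dual solution for `vecChrom G`. -/
def IsDualSol [Fintype V] (G : SimpleGraph V) (B : Matrix V V ℝ) : Prop :=
  B.PosSemidef ∧ (∀ i j, i ≠ j → ¬ G.Adj i j → B i j = 0) ∧
    (∀ i j, 0 ≤ B i j) ∧ B.trace = 1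

/-- An optimal dual solution for `vecChrom G`: feasible with objective value `vecChrom G`. -/
def IsOptDual [Fintype V] (G : SimpleGraph V) (B : Matrix V V ℝ) : Prop :=
  IsDualSol G B ∧ (∑ i, ∑ j, B i j) = vecChrom G

/-- The all-ones matrix `J`. -/
def allOnes (γ : Type*) : Matrix γ γ ℝ :=
  Matrix.of fun _ _ => 1

/-- The graph `G(B)` of a (symmetric) matrix `B`: distinct `i, j` adjacent iff `B i j ≠ 0`. -/
def matGraph (B : Matrix V V ℝ) : SimpleGraph V where
  Adj i j := i ≠ j ∧ B i j ≠ 0 ∧ B j i ≠ 0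
  symm := by constructor; intro i j hij; exact ⟨hij.1.symm, hij.2.2, hij.2.1⟩
  loopless := by constructor; intro i hi; exact hi.1 rfl

/-- The spanning subgraph `G^p` of edges tight in the vector coloring `p`. -/
def tightSub [Fintype V] (G : SimpleGraph V) {d : ℕ} (p : V → Fin d → ℝ) :
    SimpleGraph V where
  Adj i j := G.Adj i j ∧ p i ⬝ᵥ p j = -1
  symm := by
    constructor
    intro i j hij
    exact ⟨hij.1.symm, by rw [_root_.dotProduct_comm]; exact hij.2⟩
  loopless := by constructor; intro i hi; exact G.loopless.irrefl i hi.1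

/-- The skeleton `G^sk`: the spanning subgraph of edges tight in every optimal
vector coloring. -/
def skeleton [Fintype V] (G : SimpleGraph V) : SimpleGraph V where
  Adj i j := G.Adj i j ∧ ∀ (d : ℕ) (p : V → Fin d → ℝ),
      IsVecColoring G (vecChrom G) p → p i ⬝ᵥ p j = -1
  symm := by
    constructor
    intro i j hij
    refine ⟨hij.1.symm, fun d p hp => ?_⟩
    rw [_root_.dotProduct_comm]
    exact hij.2 d p hp
  loopless := by constructor; intro i hi; exact G.loopless.irrefl i hi.1

/-- `i` is neighborly in the vector coloring `p`: `-p i` lies in the conical hull of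
the vectors of the `∼_p`-neighbours of `i`. -/
def NeighborlyIn [Fintype V] (G : SimpleGraph V) {d : ℕ} (p : V → Fin d → ℝ)
    (i : V) : Prop :=
  ∃ c : V → ℝ, (∀ j, 0 ≤ c j) ∧ (∀ j, c j ≠ 0 → G.Adj i j ∧ p i ⬝ᵥ p j = -1) ∧
    -p i = ∑ j, c j • p j

/-- `i` is neighborly: neighborly in every optimal vector coloring. -/
def Neighborly [Fintype V] (G : SimpleGraph V) (i : V) : Prop :=
  ∀ (d : ℕ) (p : V → Fin d → ℝ), IsVecColoring G (vecChrom G) p → NeighborlyIn G p i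

/-- `i →_p j`: `-p i = ∑ α_l • p l` over `∼_p`-neighbours `l` of `i`, with `α_j > 0`. -/
def ArrowIn [Fintype V] (G : SimpleGraph V) {d : ℕ} (p : V → Fin d → ℝ)
    (i j : V) : Prop :=
  ∃ c : V → ℝ, (∀ l, 0 ≤ c l) ∧ (∀ l, c l ≠ 0 → G.Adj i l ∧ p i ⬝ᵥ p l = -1) ∧
    0 < c j ∧ -p i = ∑ l, c l • p l

/-- `μ` is an eigenvalue of `M`. -/
def IsEigenvalue [Fintype V] (M : Matrix V V ℝ) (μ : ℝ) : Prop :=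
  ∃ v : V → ℝ, v ≠ 0 ∧ M *ᵥ v = μ • v

/-- `lam` is the largest eigenvalue of `M`. -/
def IsMaxEigenvalue [Fintype V] (M : Matrix V V ℝ) (lam : ℝ) : Prop :=
  IsGreatest {μ : ℝ | IsEigenvalue M μ} lam

/-- `lam` is the smallest eigenvalue of `M`. -/
def IsMinEigenvalue [Fintype V] (M : Matrix V V ℝ) (lam : ℝ) : Prop :=
  IsLeast {μ : ℝ | IsEigenvalue M μ} lam

/-- The eigenspace of `M` for `μ`. -/
def eigSpace [Fintype V] (M : Matrix V V ℝ) (μ : ℝ) : Submodule ℝ (V → ℝ) :=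
  LinearMap.ker (M.mulVecLin - μ • (LinearMap.id : (V → ℝ) →ₗ[ℝ] V → ℝ))

/-- `W` is (the Gram matrix of) a convex combination of vector colorings of `G × H`
induced by `G` and by `H`: `W = a • (M ⊗ J) + b • (J ⊗ N)`. -/
def IsConvexCombInduced [Fintype α] [Fintype β] (G : SimpleGraph α) (H : SimpleGraph β)
    (W : Matrix (α × β) (α × β) ℝ) : Prop :=
  ∃ (a b : ℝ) (M : Matrix α α ℝ) (N : Matrix β β ℝ),
    0 ≤ a ∧ 0 ≤ b ∧ a + b = 1 ∧ IsOptGram G M ∧ IsOptGram H N ∧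
    W = a • (M ⊗ₖ allOnes β) + b • (allOnes α ⊗ₖ N)

end VectorColoring

section Aux
open Matrix
variable {V : Type*}

lemma tripleEntry [Fintype V] {d : ℕ} (P : Matrix V (Fin d) ℝ) (R : Matrix (Fin d) (Fin d) ℝ)
    (i j : V) :
    (P * R * Pᵀ) i j = (fun k => P i k) ⬝ᵥ (R *ᵥ fun k => P j k) := by
  simp [mul_apply, dotProduct, mulVec, Finset.sum_mul, Finset.mul_sum]
  rw [Finset.sum_comm]
  congr 1; ext k; congr 1; ext l; ring

lemma pairEntry {W : Type*} {d : ℕ} (P Q : Matrix W (Fin d) ℝ) (i j : W) :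
    (P * Qᵀ) i j = (fun k => P i k) ⬝ᵥ (fun k => Q j k) := by
  simp [mul_apply, dotProduct]

lemma matEqOfMulVec [Fintype V] [DecidableEq V] (A B : Matrix V V ℝ)
    (h : ∀ x, A *ᵥ x = B *ᵥ x) : A = B := by
  ext i j
  have := congrFun (h (Pi.single j 1)) i
  simpa [mulVec_single] using this

lemma scaledDot {m : ℕ} (c : ℝ) (u v : Fin m → ℝ) :
    ∑ k, (c * u k) * (c * v k) = c * c * (u ⬝ᵥ v) := by
  simp only [dotProduct, Finset.mul_sum]
  exact Finset.sum_congr rfl fun k _ => by ring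

end Aux


/-- Characterization of all optimal vector colorings of `G` in terms of
a max-rank vector coloring `p`: `M` is the Gram matrix of an optimal vector coloring iff
`M = P (I + R) Pᵀ` for a symmetric `R` with `pᵢᵀ R pᵢ = 0`, `pᵢᵀ R pⱼ ≤ -1 - pᵢᵀ pⱼ` on
edges, and `I + R ⪰ 0`. -/
theorem optGram_characterization {V : Type*} [Fintype V] [DecidableEq V]
    (G : SimpleGraph V) (p : V → Fin (grk G) → ℝ)
    (hp : IsVecColoring G (vecChrom G) p) (hrk : (gramMat p).rank = grk G)
    (M : Matrix V V ℝ) :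
    IsOptGram G M ↔
      ∃ R : Matrix (Fin (grk G)) (Fin (grk G)) ℝ, R.IsSymm ∧
        (∀ i, p i ⬝ᵥ (R *ᵥ p i) = 0) ∧
        (∀ i j, G.Adj i j → p i ⬝ᵥ (R *ᵥ p j) ≤ -1 - p i ⬝ᵥ p j) ∧
        (1 + R).PosSemidef ∧
        M = (Matrix.of fun i k => p i k) * (1 + R) * (Matrix.of fun i k => p i k)ᵀ := by
  set P : Matrix V (Fin (grk G)) ℝ := Matrix.of fun i k => p i k with hPdef
  have hPp : ∀ i, (fun k => P i k) = p i := fun _ => rfl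
  have hA : gramMat p = P * Pᵀ := by
    ext i j
    rw [pairEntry P P i j]
    simp [gramMat, hPdef]
  constructor
  · rintro ⟨e, q, hq, rfl⟩
    set Q : Matrix V (Fin e) ℝ := Matrix.of fun i k => q i k with hQdef
    have hQq : ∀ i, (fun k => Q i k) = q i := fun _ => rfl
    have hM : gramMat q = Q * Qᵀ := by
      ext i j
      rw [pairEntry Q Q i j]
      simp [gramMat, hQdef]
    -- the combined coloring
    set c : ℝ := Real.sqrt 2⁻¹ with hcdef
    have hc : c * c = 2⁻¹ := Real.mul_self_sqrt (by norm_num)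
    set r : V → Fin (grk G + e) → ℝ :=
      fun i => Fin.append (fun k => c * p i k) (fun k => c * q i k) with hrdef
    have hrdot : ∀ i j, r i ⬝ᵥ r j = 2⁻¹ * (p i ⬝ᵥ p j + q i ⬝ᵥ q j) := by
      intro i j
      show (∑ k, r i k * r j k) = _
      rw [Fin.sum_univ_add]
      simp only [hrdef, Fin.append_left, Fin.append_right]
      rw [scaledDot c (p i) (p j), scaledDot c (q i) (q j), hc]
      ring
    have hrcol : IsVecColoring G (vecChrom G) r := by
      constructor
      · intro i; rw [hrdot, hp.1 i, hq.1 i]; ring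
      · intro i j hij
        have h1 := hp.2 i j hij; have h2 := hq.2 i j hij
        rw [hrdot]; linarith
    set N := gramMat r with hNdef
    have hNopt : IsOptGram G N := ⟨_, r, hrcol, rfl⟩
    have hNrank : N.rank ≤ grk G := by
      apply le_csSup
      · refine ⟨Fintype.card V, ?_⟩
        rintro s ⟨X, _, rfl⟩
        exact Matrix.rank_le_card_height X
      · exact ⟨N, hNopt, rfl⟩
    have hNmat : N = (2⁻¹ : ℝ) • (P * Pᵀ + Q * Qᵀ) := by
      ext i j
      have h1 : (P * Pᵀ) i j = p i ⬝ᵥ p j := by rw [pairEntry P P i j, hPp, hPp]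
      have h2 : (Q * Qᵀ) i j = q i ⬝ᵥ q j := by rw [pairEntry Q Q i j, hQq, hQq]
      simp only [hNdef, gramMat, Matrix.of_apply, Matrix.smul_apply, Matrix.add_apply,
        smul_eq_mul, h1, h2]
      exact hrdot i j
    have dot_self_nonneg : ∀ {m : ℕ} (x : Fin m → ℝ), (0:ℝ) ≤ x ⬝ᵥ x :=
      fun x => Finset.sum_nonneg fun i _ => mul_self_nonneg _
    have hker : ∀ x : V → ℝ, N *ᵥ x = 0 → Pᵀ *ᵥ x = 0 ∧ Qᵀ *ᵥ x = 0 := by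
      intro x hx
      have h0 : x ⬝ᵥ (N *ᵥ x) = 0 := by rw [hx, dotProduct_zero]
      have hexp : x ⬝ᵥ (N *ᵥ x)
          = 2⁻¹ * ((Pᵀ *ᵥ x) ⬝ᵥ (Pᵀ *ᵥ x) + (Qᵀ *ᵥ x) ⬝ᵥ (Qᵀ *ᵥ x)) := by
        rw [hNmat, Matrix.smul_mulVec, Matrix.add_mulVec, dotProduct_smul,
          dotProduct_add, ← Matrix.mulVec_mulVec, ← Matrix.mulVec_mulVec,
          Matrix.dotProduct_mulVec x P, ← Matrix.mulVec_transpose,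
          Matrix.dotProduct_mulVec x Q, ← Matrix.mulVec_transpose]
        simp
      have hPnn := dot_self_nonneg (Pᵀ *ᵥ x)
      have hQnn := dot_self_nonneg (Qᵀ *ᵥ x)
      rw [hexp] at h0
      exact ⟨dotProduct_self_eq_zero.mp (by linarith),
        dotProduct_self_eq_zero.mp (by linarith)⟩
    set KN := LinearMap.ker N.mulVecLin with hKN
    set KA := LinearMap.ker (gramMat p).mulVecLin with hKA
    have hAker : ∀ x : V → ℝ, (gramMat p) *ᵥ x = 0 ↔ Pᵀ *ᵥ x = 0 := by
      intro x
      constructor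
      · intro hx
        have h0 : x ⬝ᵥ ((gramMat p) *ᵥ x) = 0 := by rw [hx, dotProduct_zero]
        rw [hA, ← Matrix.mulVec_mulVec, Matrix.dotProduct_mulVec x P,
          ← Matrix.mulVec_transpose] at h0
        exact dotProduct_self_eq_zero.mp h0
      · intro hx
        rw [hA, ← Matrix.mulVec_mulVec, hx, Matrix.mulVec_zero]
    have hsub : KN ≤ KA := by
      intro x hx
      have hx' : N *ᵥ x = 0 := hx
      have := (hker x hx').1
      show (gramMat p).mulVecLin x = 0
      simpa [Matrix.mulVecLin_apply] using (hAker x).mpr this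
    have hrn1 : (gramMat p).rank + Module.finrank ℝ KA = Fintype.card V := by
      have := LinearMap.finrank_range_add_finrank_ker (gramMat p).mulVecLin
      rwa [Module.finrank_fintype_fun_eq_card] at this
    have hrn2 : N.rank + Module.finrank ℝ KN = Fintype.card V := by
      have := LinearMap.finrank_range_add_finrank_ker N.mulVecLin
      rwa [Module.finrank_fintype_fun_eq_card] at this
    have hkeq : KN = KA := by
      apply Submodule.eq_of_le_of_finrank_le hsub
      rw [hrk] at hrn1
      omega
    have hkey : ∀ x : V → ℝ, Pᵀ *ᵥ x = 0 → (gramMat q) *ᵥ x = 0 := by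
      intro x hx
      have hxA : x ∈ KA := by
        show (gramMat p).mulVecLin x = 0
        simpa [Matrix.mulVecLin_apply] using (hAker x).mpr hx
      rw [← hkeq] at hxA
      have hxN : N *ᵥ x = 0 := hxA
      have := (hker x hxN).2
      rw [hM, ← Matrix.mulVec_mulVec, this, Matrix.mulVec_zero]
    have hrankPT : Pᵀ.rank = grk G := by
      have h1 : Pᵀ.rank = P.rank := Matrix.rank_transpose P
      have h2 : P.rank ≤ grk G := by
        simpa using Matrix.rank_le_card_width P
      have h3 : grk G ≤ P.rank := by
        have h4 := Matrix.rank_mul_le_left P Pᵀ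
        rw [← hA, hrk] at h4
        omega
      omega
    have hsurj : Function.Surjective Pᵀ.mulVecLin := by
      rw [← LinearMap.range_eq_top]
      apply Submodule.eq_top_of_finrank_eq
      rw [Module.finrank_fintype_fun_eq_card]
      simpa [Matrix.rank] using hrankPT
    choose l hl using fun k : Fin (grk G) => hsurj (Pi.single k 1)
    set L : Matrix V (Fin (grk G)) ℝ := Matrix.of fun i k => l k i with hLdef
    have hPL : Pᵀ * L = 1 := by
      ext a b
      have hlb := congrFun (hl b) a
      simp only [Matrix.mulVecLin_apply] at hlb
      simp only [Matrix.mul_apply, hLdef, Matrix.of_apply, Matrix.one_apply]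
      rw [show (∑ i, Pᵀ a i * l b i) = (Pᵀ *ᵥ l b) a from rfl, hlb]
      simp [Pi.single_apply, eq_comm]
    have hMsymm : (gramMat q)ᵀ = gramMat q := by
      ext i j; simp [gramMat, Matrix.transpose_apply, dotProduct_comm]
    have hMLP : gramMat q = gramMat q * (L * Pᵀ) := by
      apply matEqOfMulVec
      intro x
      have h1 : Pᵀ *ᵥ (x - L *ᵥ (Pᵀ *ᵥ x)) = 0 := by
        have h2 : Pᵀ *ᵥ (L *ᵥ (Pᵀ *ᵥ x)) = Pᵀ *ᵥ x := by
          rw [Matrix.mulVec_mulVec, hPL, Matrix.one_mulVec]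
        rw [Matrix.mulVec_sub, h2, sub_self]
      have h2 := hkey _ h1
      rw [Matrix.mulVec_sub] at h2
      have h3 : gramMat q *ᵥ x = gramMat q *ᵥ (L *ᵥ (Pᵀ *ᵥ x)) := sub_eq_zero.mp h2
      rw [h3, Matrix.mulVec_mulVec, Matrix.mulVec_mulVec, Matrix.mul_assoc]
    have hfinal : gramMat q = P * (Lᵀ * gramMat q * L) * Pᵀ := by
      have h4 : gramMat q = P * Lᵀ * gramMat q := by
        calc gramMat q = (gramMat q)ᵀ := hMsymm.symm
        _ = (gramMat q * (L * Pᵀ))ᵀ := by rw [← hMLP]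
        _ = (L * Pᵀ)ᵀ * (gramMat q)ᵀ := by rw [Matrix.transpose_mul]
        _ = P * Lᵀ * gramMat q := by
            rw [Matrix.transpose_mul, Matrix.transpose_transpose, hMsymm, Matrix.mul_assoc,
              ← Matrix.mul_assoc]
      calc gramMat q = gramMat q * (L * Pᵀ) := hMLP
      _ = (P * Lᵀ * gramMat q) * (L * Pᵀ) := by rw [← h4]
      _ = P * (Lᵀ * gramMat q * L) * Pᵀ := by simp only [Matrix.mul_assoc]
    set S : Matrix (Fin (grk G)) (Fin (grk G)) ℝ := Lᵀ * gramMat q * L with hSdef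
    have hSsymm : Sᵀ = S := by
      rw [hSdef, Matrix.transpose_mul, Matrix.transpose_mul, Matrix.transpose_transpose,
        hMsymm, Matrix.mul_assoc]
    have hSpsd : S.PosSemidef := by
      have hMpsd : (gramMat q).PosSemidef := by
        rw [hM]
        have := Matrix.posSemidef_self_mul_conjTranspose Q
        simpa using this
      have := hMpsd.conjTranspose_mul_mul_same L
      simpa [hSdef] using this
    have hentry : ∀ i j, p i ⬝ᵥ ((S - 1) *ᵥ p j) = gramMat q i j - gramMat p i j := by
      intro i j
      have h5 := tripleEntry P (S - 1) i j
      rw [hPp, hPp] at h5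
      rw [← h5, Matrix.mul_sub, Matrix.mul_one, Matrix.sub_mul, Matrix.sub_apply,
        ← hfinal, ← hA]
    have hone : (1 : Matrix (Fin (grk G)) (Fin (grk G)) ℝ) + (S - 1) = S := by abel
    refine ⟨S - 1, ?_, ?_, ?_, ?_, ?_⟩
    · show (S - 1)ᵀ = S - 1
      rw [Matrix.transpose_sub, hSsymm, Matrix.transpose_one]
    · intro i
      rw [hentry i i]
      have e1 : gramMat q i i = vecChrom G - 1 := hq.1 i
      have e2 : gramMat p i i = vecChrom G - 1 := hp.1 i
      rw [e1, e2, sub_self]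
    · intro i j hij
      rw [hentry i j]
      have e1 : gramMat q i j ≤ -1 := hq.2 i j hij
      have e2 : gramMat p i j = p i ⬝ᵥ p j := rfl
      rw [e2]; linarith
    · rw [hone]; exact hSpsd
    · rw [hone]; exact hfinal
  · rintro ⟨R, hRsymm, hdiag, hedge, hpsd, rfl⟩
    set S : Matrix (Fin (grk G)) (Fin (grk G)) ℝ := 1 + R with hSdef
    open scoped MatrixOrder in
    set C := CFC.sqrt S with hCdef
    open scoped MatrixOrder in
    have hC2 : C * C = S := CFC.sqrt_mul_sqrt_self S (Matrix.nonneg_iff_posSemidef.mpr hpsd)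
    open scoped MatrixOrder in
    have hCs : Cᵀ = C := by
      have h := (Matrix.nonneg_iff_posSemidef.mp (CFC.sqrt_nonneg S)).1
      ext i j
      have := congrFun (congrFun h i) j
      simpa [Matrix.conjTranspose_apply] using this
    set q : V → Fin (grk G) → ℝ := fun i k => (P * C) i k with hqdef
    have hqq : ∀ i j, q i ⬝ᵥ q j = p i ⬝ᵥ p j + p i ⬝ᵥ (R *ᵥ p j) := by
      intro i j
      have h1 : q i ⬝ᵥ q j = ((P * C) * (P * C)ᵀ) i j := (pairEntry (P * C) (P * C) i j).symm
      rw [h1, Matrix.transpose_mul, hCs,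
        show P * C * (C * Pᵀ) = P * (C * C) * Pᵀ by simp only [Matrix.mul_assoc], hC2]
      have h2 := tripleEntry P S i j
      rw [hPp, hPp] at h2
      rw [h2, hSdef, Matrix.add_mulVec, dotProduct_add, Matrix.one_mulVec]
    refine ⟨grk G, q, ⟨?_, ?_⟩, ?_⟩
    · intro i
      rw [hqq, hdiag i, add_zero]
      exact hp.1 i
    · intro i j hij
      rw [hqq]
      have := hedge i j hij
      linarith
    · ext i j
      rw [tripleEntry P (1 + R) i j, hPp, hPp]
      show p i ⬝ᵥ ((1 + R) *ᵥ p j) = q i ⬝ᵥ q j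
      rw [hqq, Matrix.add_mulVec, dotProduct_add, Matrix.one_mulVec]
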